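/- Strong completeness of OL: every OL-consistent set of formulas of the static language is satisfiable in some pointed observational epistemic model (where each accessibility relation is Euclidean, transitive and serial, and no world verifies both obs_a p and obs_a ¬p). Consequently, a formula valid over observational epistemic models is a theorem of OL. -/

import Mathlib

/-- Atomic symbols: propositional atoms and observation atoms obs_a p (sign true)
    or obs_a ¬p (sign false). -/
inductive Atm (P A : Type) : Type
  | prop : P → Atm P A
  | obs  : A → P → Bool → Atm P A
deriving DecidableEq

/-- Static formulas of the language OL. -/
inductive Form (P A : Type) : Type
  | atom : Atm P A → Form P A
  | neg  : Form P A → Form P A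
  | and  : Form P A → Form P A → Form P A
  | bel  : A → Form P A → Form P A
deriving DecidableEq

def Form.imp {P A : Type} (φ ψ : Form P A) : Form P A := .neg (.and φ (.neg ψ))

/-- Kripke model with agents A and atoms Atm P A. -/
structure KModel (W P A : Type) where
  R : A → W → W → Prop
  V : Atm P A → W → Prop

/-- Satisfaction relation. -/
def sat {W P A : Type} (M : KModel W P A) : W → Form P A → Prop
  | w, .atom q => M.V q w
  | w, .neg φ => ¬ sat M w φ
  | w, .and φ ψ => sat M w φ ∧ sat M w ψ
  | w, .bel a φ => ∀ v, M.R a w v → sat M v φ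

def Euclid {α : Type} (R : α → α → Prop) : Prop := ∀ x y z, R x y → R x z → R y z
def Trans' {α : Type} (R : α → α → Prop) : Prop := ∀ x y z, R x y → R y z → R x z
def Serial {α : Type} (R : α → α → Prop) : Prop := ∀ x, ∃ y, R x y

/-- Observational epistemic model: each relation is Euclidean, transitive and
    serial, and no world verifies both obs_a p and obs_a ¬p. -/
def ObsModel {W P A : Type} (M : KModel W P A) : Prop :=
  (∀ a, Euclid (M.R a) ∧ Trans' (M.R a) ∧ Serial (M.R a)) ∧
  (∀ a p w, M.V (.obs a p true) w → ¬ M.V (.obs a p false) w)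

/-- Propositional evaluation treating modal/atomic formulas as atoms. -/
def propEval {P A : Type} (v : Form P A → Prop) : Form P A → Prop
  | .neg φ => ¬ propEval v φ
  | .and φ ψ => propEval v φ ∧ propEval v ψ
  | .atom q => v (.atom q)
  | .bel a φ => v (.bel a φ)

/-- Theorems of the axiom system OL: propositional tautologies, K, 4, 5, D for
    each B_a, the axiom Obs, modus ponens and necessitation. -/
inductive OLProof {P A : Type} : Form P A → Prop
  | taut {φ} : (∀ v, propEval v φ) → OLProof φ
  | axK {a φ ψ} : OLProof (.imp (.bel a (.imp φ ψ)) (.imp (.bel a φ) (.bel a ψ)))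
  | ax4 {a φ} : OLProof (.imp (.bel a φ) (.bel a (.bel a φ)))
  | ax5 {a φ} : OLProof (.imp (.neg (.bel a φ)) (.bel a (.neg (.bel a φ))))
  | axD {a φ} : OLProof (.imp (.bel a φ) (.neg (.bel a (.neg φ))))
  | axObs {a p} : OLProof (.imp (.atom (.obs a p true)) (.neg (.atom (.obs a p false))))
  | mp {φ ψ} : OLProof (.imp φ ψ) → OLProof φ → OLProof ψ
  | nec {a φ} : OLProof φ → OLProof (.bel a φ)

/-- Γ proves φ: some finite list of members of Γ implies φ. -/
def ProvesFrom {P A : Type} (Γ : Set (Form P A)) (φ : Form P A) : Prop :=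
  ∃ L : List (Form P A), (∀ ψ ∈ L, ψ ∈ Γ) ∧ OLProof (L.foldr Form.imp φ)

def OLConsistent {P A : Type} (Γ : Set (Form P A)) : Prop :=
  ¬ ∃ φ, ProvesFrom Γ φ ∧ ProvesFrom Γ (.neg φ)

/-- Maximal consistent set. -/
def MCS {P A : Type} (Γ : Set (Form P A)) : Prop :=
  OLConsistent Γ ∧ ∀ φ, φ ∈ Γ ∨ Form.neg φ ∈ Γ

/-- Worlds of the canonical model. -/
def CanW (P A : Type) : Type := {Γ : Set (Form P A) // MCS Γ}

/-- The canonical model of OL. -/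
def canonical (P A : Type) : KModel (CanW P A) P A where
  R a Δ₁ Δ₂ := ∀ ψ, Form.bel a ψ ∈ Δ₁.1 → ψ ∈ Δ₂.1
  V q Δ := Form.atom q ∈ Δ.1

section Aux
variable {P A : Type}

open Form

private lemma OLt {φ : Form P A} (h : ∀ v, propEval v φ) : OLProof φ := OLProof.taut h

private lemma t_id {φ : Form P A} : OLProof (φ.imp φ) :=
  OLt (by intro v; simp [propEval, Form.imp])

private lemma t_k {φ ψ : Form P A} : OLProof (φ.imp (ψ.imp φ)) :=
  OLt (by intro v; simp [propEval, Form.imp] <;> tauto)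

private lemma t_comp {φ ψ χ : Form P A} :
    OLProof ((φ.imp ψ).imp ((ψ.imp χ).imp (φ.imp χ))) :=
  OLt (by intro v; simp [propEval, Form.imp] <;> tauto)

private lemma comp {φ ψ χ : Form P A} (h1 : OLProof (φ.imp ψ)) (h2 : OLProof (ψ.imp χ)) :
    OLProof (φ.imp χ) := (t_comp.mp h1).mp h2

private lemma t_mono {a φ ψ : Form P A} :
    OLProof ((φ.imp ψ).imp ((a.imp φ).imp (a.imp ψ))) :=
  OLt (by intro v; simp [propEval, Form.imp] <;> tauto)

private lemma pImp {a φ ψ : Form P A} (h : OLProof (φ.imp ψ)) :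
    OLProof ((a.imp φ).imp (a.imp ψ)) := t_mono.mp h

private lemma t_s {a φ ψ χ : Form P A} :
    OLProof ((φ.imp (ψ.imp χ)).imp ((a.imp φ).imp ((a.imp ψ).imp (a.imp χ)))) :=
  OLt (by intro v; simp [propEval, Form.imp] <;> tauto)

private lemma t_swap {a b c : Form P A} :
    OLProof ((a.imp (b.imp c)).imp (b.imp (a.imp c))) :=
  OLt (by intro v; simp [propEval, Form.imp] <;> tauto)

private lemma t_contract {φ ψ : Form P A} :
    OLProof ((φ.imp (φ.imp ψ)).imp (φ.imp ψ)) :=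
  OLt (by intro v; simp [propEval, Form.imp] <;> tauto)

private lemma t_dne {φ : Form P A} : OLProof ((φ.neg.neg).imp φ) :=
  OLt (by intro v; simp [propEval, Form.imp] <;> tauto)

private lemma t_exfalso {φ ψ : Form P A} : OLProof (φ.imp (φ.neg.imp ψ)) :=
  OLt (by intro v; simp [propEval, Form.imp] <;> tauto)

private lemma t_negI {φ : Form P A} : OLProof ((φ.imp φ.neg).imp φ.neg) :=
  OLt (by intro v; simp [propEval, Form.imp] <;> tauto)

private lemma t_andI {φ ψ : Form P A} : OLProof (φ.imp (ψ.imp (φ.and ψ))) :=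
  OLt (by intro v; simp [propEval, Form.imp] <;> tauto)

private lemma t_and1 {φ ψ : Form P A} : OLProof ((φ.and ψ).imp φ) :=
  OLt (by intro v; simp [propEval, Form.imp] <;> tauto)

private lemma t_and2 {φ ψ : Form P A} : OLProof ((φ.and ψ).imp ψ) :=
  OLt (by intro v; simp [propEval, Form.imp] <;> tauto)

private lemma t_notand {φ : Form P A} : OLProof ((φ.and φ.neg).neg) :=
  OLt (by intro v; simp [propEval, Form.imp] <;> tauto)

/-- monotonicity inside a foldr of implications -/
private lemma foldr_imp {φ ψ : Form P A} (h : OLProof (φ.imp ψ)) (L : List (Form P A)) :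
    OLProof ((L.foldr Form.imp φ).imp (L.foldr Form.imp ψ)) := by
  induction L with
  | nil => exact h
  | cons x L ih => exact pImp ih

/-- a theorem holds under any list of hypotheses -/
private lemma foldr_thm {φ : Form P A} (h : OLProof φ) (L : List (Form P A)) :
    OLProof (L.foldr Form.imp φ) := by
  induction L with
  | nil => exact h
  | cons x L ih => exact t_k.mp ih

/-- weakening: a formula implies itself under extra hypotheses -/
private lemma t_weak_list {φ : Form P A} (L : List (Form P A)) :
    OLProof (φ.imp (L.foldr Form.imp φ)) := by
  induction L with
  | nil => exact t_id
  | cons x L ih => exact comp ih t_k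

private lemma foldr_append {φ : Form P A} (L L' : List (Form P A)) :
    OLProof ((L.foldr Form.imp φ).imp ((L ++ L').foldr Form.imp φ)) := by
  induction L with
  | nil => exact t_weak_list L'
  | cons x L ih => exact pImp ih

private lemma foldr_K {φ ψ : Form P A} (L : List (Form P A)) :
    OLProof ((L.foldr Form.imp (φ.imp ψ)).imp
      ((L.foldr Form.imp φ).imp (L.foldr Form.imp ψ))) := by
  induction L with
  | nil => exact t_id
  | cons x L ih => exact t_s.mp ih

private lemma provesFrom_mem {Γ : Set (Form P A)} {φ : Form P A} (h : φ ∈ Γ) :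
    ProvesFrom Γ φ :=
  ⟨[φ], by simpa using h, t_id⟩

private lemma provesFrom_thm {Γ : Set (Form P A)} {φ : Form P A} (h : OLProof φ) :
    ProvesFrom Γ φ :=
  ⟨[], by simp, h⟩

private lemma provesFrom_imp {Γ : Set (Form P A)} {φ ψ : Form P A}
    (h : OLProof (φ.imp ψ)) (hp : ProvesFrom Γ φ) : ProvesFrom Γ ψ := by
  obtain ⟨L, hL, p⟩ := hp
  exact ⟨L, hL, (foldr_imp h L).mp p⟩

private lemma provesFrom_mp {Γ : Set (Form P A)} {φ ψ : Form P A}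
    (h1 : ProvesFrom Γ (φ.imp ψ)) (h2 : ProvesFrom Γ φ) : ProvesFrom Γ ψ := by
  obtain ⟨L1, hL1, p1⟩ := h1
  obtain ⟨L2, hL2, p2⟩ := h2
  refine ⟨L1 ++ L2, ?_, ?_⟩
  · intro x hx; rcases List.mem_append.1 hx with h | h
    · exact hL1 x h
    · exact hL2 x h
  · have a : OLProof ((L1 ++ L2).foldr Form.imp φ) := by
      rw [List.foldr_append]; exact foldr_thm p2 L1
    have b : OLProof ((L1 ++ L2).foldr Form.imp (φ.imp ψ)) :=
      (foldr_append L1 L2).mp p1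
    exact ((foldr_K (L1 ++ L2)).mp b).mp a

private lemma push_imp (x : Form P A) (L : List (Form P A)) (ψ : Form P A) :
    OLProof (((x :: L).foldr Form.imp ψ).imp (L.foldr Form.imp (x.imp ψ))) := by
  induction L with
  | nil => exact t_id
  | cons a L ih => exact comp t_swap (pImp ih)

private lemma deduction_aux {Γ : Set (Form P A)} {χ : Form P A} :
    ∀ (L : List (Form P A)) (ψ : Form P A), (∀ x ∈ L, x ∈ Γ ∪ {χ}) →
      OLProof (L.foldr Form.imp ψ) → ProvesFrom Γ (χ.imp ψ) := by
  intro L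
  induction L with
  | nil => intro ψ _ p; exact provesFrom_thm (t_k.mp p)
  | cons x L ih =>
    intro ψ hmem p
    have p' : OLProof (L.foldr Form.imp (x.imp ψ)) := (push_imp x L ψ).mp p
    have hIH : ProvesFrom Γ (χ.imp (x.imp ψ)) :=
      ih (x.imp ψ) (fun y hy => hmem y (List.mem_cons_of_mem _ hy)) p'
    rcases hmem x (List.mem_cons_self) with hxΓ | hxχ
    · have h1 : ProvesFrom Γ (x.imp (χ.imp ψ)) := provesFrom_imp t_swap hIH
      exact provesFrom_mp h1 (provesFrom_mem hxΓ)
    · have : x = χ := by simpa using hxχ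
      subst this
      exact provesFrom_imp t_contract hIH

private lemma deduction {Γ : Set (Form P A)} {χ ψ : Form P A}
    (h : ProvesFrom (Γ ∪ {χ}) ψ) : ProvesFrom Γ (χ.imp ψ) := by
  obtain ⟨L, hL, p⟩ := h
  exact deduction_aux L ψ hL p

private lemma proves_all_of_inconsistent {Γ : Set (Form P A)}
    (h : ¬ OLConsistent Γ) (ψ : Form P A) : ProvesFrom Γ ψ := by
  rw [OLConsistent, not_not] at h
  obtain ⟨φ, h1, h2⟩ := h
  exact provesFrom_mp (provesFrom_mp (provesFrom_thm t_exfalso) h1) h2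

private lemma neg_of_inconsistent_insert {Γ : Set (Form P A)} {χ : Form P A}
    (h : ¬ OLConsistent (Γ ∪ {χ})) : ProvesFrom Γ χ.neg := by
  have := deduction (proves_all_of_inconsistent h χ.neg)
  exact provesFrom_imp t_negI this

private lemma inconsistent_of_proves_both {Γ : Set (Form P A)} {φ : Form P A}
    (h1 : ProvesFrom Γ φ) (h2 : ProvesFrom Γ φ.neg) : ¬ OLConsistent Γ := by
  intro hc; exact hc ⟨φ, h1, h2⟩

/-- MCS basic facts -/
private lemma mcs_mem_of_proves {Γ : Set (Form P A)} (hΓ : MCS Γ) {φ : Form P A}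
    (h : ProvesFrom Γ φ) : φ ∈ Γ := by
  rcases hΓ.2 φ with hm | hm
  · exact hm
  · exact absurd (inconsistent_of_proves_both h (provesFrom_mem hm)) (not_not_intro hΓ.1)

private lemma mcs_neg_iff {Γ : Set (Form P A)} (hΓ : MCS Γ) {φ : Form P A} :
    Form.neg φ ∈ Γ ↔ φ ∉ Γ := by
  constructor
  · intro hn hp
    exact hΓ.1 ⟨φ, provesFrom_mem hp, provesFrom_mem hn⟩
  · intro hp
    rcases hΓ.2 φ with h | h
    · exact absurd h hp
    · exact h

private lemma mcs_and_iff {Γ : Set (Form P A)} (hΓ : MCS Γ) {φ ψ : Form P A} :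
    Form.and φ ψ ∈ Γ ↔ φ ∈ Γ ∧ ψ ∈ Γ := by
  constructor
  · intro h
    exact ⟨mcs_mem_of_proves hΓ (provesFrom_imp t_and1 (provesFrom_mem h)),
      mcs_mem_of_proves hΓ (provesFrom_imp t_and2 (provesFrom_mem h))⟩
  · rintro ⟨h1, h2⟩
    exact mcs_mem_of_proves hΓ
      (provesFrom_mp (provesFrom_imp t_andI (provesFrom_mem h1)) (provesFrom_mem h2))

/-- Lindenbaum -/
private lemma lindenbaum {Γ : Set (Form P A)} (hΓ : OLConsistent Γ) :
    ∃ Δ : Set (Form P A), Γ ⊆ Δ ∧ MCS Δ := by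
  have hchainub : ∀ c ⊆ {Δ : Set (Form P A) | OLConsistent Δ}, IsChain (· ⊆ ·) c →
      c.Nonempty → ∃ ub ∈ {Δ : Set (Form P A) | OLConsistent Δ}, ∀ s ∈ c, s ⊆ ub := by
    intro c hc hchain hne
    refine ⟨⋃₀ c, ?_, fun s hs => Set.subset_sUnion_of_mem hs⟩
    intro hincon
    obtain ⟨φ, ⟨L1, hL1, p1⟩, ⟨L2, hL2, p2⟩⟩ := hincon
    have hlist : ∀ L : List (Form P A), (∀ x ∈ L, x ∈ ⋃₀ c) → ∃ s ∈ c, ∀ x ∈ L, x ∈ s := by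
      intro L
      induction L with
      | nil => intro _; obtain ⟨s, hs⟩ := hne; exact ⟨s, hs, by simp⟩
      | cons x L ih =>
        intro hmem
        obtain ⟨s, hsc, hsL⟩ := ih (fun y hy => hmem y (List.mem_cons_of_mem _ hy))
        obtain ⟨t, htc, hxt⟩ := hmem x (List.mem_cons_self)
        by_cases hst : s = t
        · subst hst; exact ⟨s, hsc, by
            intro y hy; rcases List.mem_cons.1 hy with rfl | hy
            · exact hxt
            · exact hsL y hy⟩
        · rcases hchain hsc htc hst with h | h
          · exact ⟨t, htc, by
              intro y hy; rcases List.mem_cons.1 hy with rfl | hy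
              · exact hxt
              · exact h (hsL y hy)⟩
          · exact ⟨s, hsc, by
              intro y hy; rcases List.mem_cons.1 hy with rfl | hy
              · exact h hxt
              · exact hsL y hy⟩
    obtain ⟨s, hsc, hs⟩ := hlist (L1 ++ L2) (by
      intro x hx; rcases List.mem_append.1 hx with h | h
      · exact hL1 x h
      · exact hL2 x h)
    exact hc hsc ⟨φ, ⟨L1, fun x hx => hs x (List.mem_append.2 (Or.inl hx)), p1⟩,
      ⟨L2, fun x hx => hs x (List.mem_append.2 (Or.inr hx)), p2⟩⟩
  obtain ⟨m, hsub, hm⟩ := zorn_subset_nonempty {Δ : Set (Form P A) | OLConsistent Δ}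
    hchainub Γ hΓ
  refine ⟨m, hsub, hm.1, fun φ => ?_⟩
  by_contra hcon
  push_neg at hcon
  obtain ⟨h1, h2⟩ := hcon
  have key : ∀ χ : Form P A, χ ∉ m → ProvesFrom m χ.neg := by
    intro χ hχ
    apply neg_of_inconsistent_insert
    intro hcons
    have : m ∪ {χ} ⊆ m := hm.2 hcons Set.subset_union_left
    exact hχ (this (Set.mem_union_right _ rfl))
  exact hm.1 ⟨φ.neg, key φ h1, key φ.neg h2⟩

/-- necessitation distributed over a list of hypotheses -/
private lemma bel_foldr (a : A) (L : List (Form P A)) (φ : Form P A) :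
    OLProof ((Form.bel a (L.foldr Form.imp φ)).imp
      ((L.map (Form.bel a)).foldr Form.imp (Form.bel a φ))) := by
  induction L with
  | nil => exact t_id
  | cons x L ih => exact comp OLProof.axK (pImp ih)

private lemma belset_proves {Δ : Set (Form P A)} (hΔ : MCS Δ) {a : A} {φ : Form P A}
    (h : ProvesFrom {ψ | Form.bel a ψ ∈ Δ} φ) : Form.bel a φ ∈ Δ := by
  obtain ⟨L, hL, p⟩ := h
  have p1 : OLProof ((L.map (Form.bel a)).foldr Form.imp (Form.bel a φ)) :=
    (bel_foldr a L φ).mp (OLProof.nec p)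
  apply mcs_mem_of_proves hΔ
  refine ⟨L.map (Form.bel a), ?_, p1⟩
  intro x hx
  obtain ⟨y, hy, rfl⟩ := List.mem_map.1 hx
  exact hL y hy

private lemma belset_consistent {Δ : Set (Form P A)} (hΔ : MCS Δ) (a : A) :
    OLConsistent {ψ | Form.bel a ψ ∈ Δ} := by
  intro hincon
  obtain ⟨χ, h1, h2⟩ := hincon
  have hbot : ProvesFrom {ψ | Form.bel a ψ ∈ Δ} (χ.and χ.neg) :=
    provesFrom_mp (provesFrom_imp t_andI h1) h2
  have hB : Form.bel a (χ.and χ.neg) ∈ Δ := belset_proves hΔ hbot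
  have hBn : Form.bel a ((χ.and χ.neg).neg) ∈ Δ :=
    mcs_mem_of_proves hΔ (provesFrom_thm (OLProof.nec t_notand))
  have hD : ProvesFrom Δ ((Form.bel a ((χ.and χ.neg).neg)).neg) :=
    provesFrom_imp OLProof.axD (provesFrom_mem hB)
  exact hΔ.1 ⟨_, provesFrom_mem hBn, hD⟩

/-- the truth lemma -/
private lemma truth_lemma : ∀ (φ : Form P A) (Δ : CanW P A),
    sat (canonical P A) Δ φ ↔ φ ∈ Δ.1 := by
  intro φ
  induction φ with
  | atom q => intro Δ; simp [sat, canonical]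
  | neg φ ih =>
    intro Δ
    simp only [sat, ih Δ]
    exact (mcs_neg_iff Δ.2).symm
  | and φ ψ ih1 ih2 =>
    intro Δ
    simp only [sat, ih1 Δ, ih2 Δ]
    exact (mcs_and_iff Δ.2).symm
  | bel a φ ih =>
    intro Δ
    constructor
    · intro hsat
      by_contra hmem
      have hcons : OLConsistent ({ψ | Form.bel a ψ ∈ Δ.1} ∪ {φ.neg}) := by
        intro hincon
        have hn : ProvesFrom {ψ | Form.bel a ψ ∈ Δ.1} (φ.neg.neg) :=
          neg_of_inconsistent_insert (not_not_intro hincon)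
        have : ProvesFrom {ψ | Form.bel a ψ ∈ Δ.1} φ := provesFrom_imp t_dne hn
        exact hmem (belset_proves Δ.2 this)
      obtain ⟨Δ', hsub, hΔ'⟩ := lindenbaum hcons
      have hR : (canonical P A).R a Δ ⟨Δ', hΔ'⟩ := by
        intro ψ hψ; exact hsub (Set.mem_union_left _ hψ)
      have hφn : φ.neg ∈ Δ' := hsub (Set.mem_union_right _ rfl)
      have : φ ∉ Δ' := (mcs_neg_iff hΔ').1 hφn
      exact this ((ih ⟨Δ', hΔ'⟩).1 (hsat _ hR))
    · intro h v hv
      exact (ih v).2 (hv φ h)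

private lemma canonical_obs : ObsModel (canonical P A) := by
  constructor
  · intro a
    refine ⟨?_, ?_, ?_⟩
    · -- Euclidean
      intro x y z hxy hxz ψ hψ
      by_contra hz
      have hbx : Form.bel a ψ ∉ x.1 := fun h => hz (hxz ψ h)
      have : Form.neg (Form.bel a ψ) ∈ x.1 := (mcs_neg_iff x.2).2 hbx
      have h5 : Form.bel a (Form.neg (Form.bel a ψ)) ∈ x.1 :=
        mcs_mem_of_proves x.2 (provesFrom_imp OLProof.ax5 (provesFrom_mem this))
      have : Form.neg (Form.bel a ψ) ∈ y.1 := hxy _ h5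
      exact (mcs_neg_iff y.2).1 this hψ
    · -- transitive
      intro x y z hxy hyz ψ hψ
      have : Form.bel a (Form.bel a ψ) ∈ x.1 :=
        mcs_mem_of_proves x.2 (provesFrom_imp OLProof.ax4 (provesFrom_mem hψ))
      exact hyz ψ (hxy _ this)
    · -- serial
      intro x
      obtain ⟨Δ', hsub, hΔ'⟩ := lindenbaum (belset_consistent x.2 a)
      exact ⟨⟨Δ', hΔ'⟩, fun ψ hψ => hsub hψ⟩
  · intro a p w h1 h2
    have hn : ProvesFrom w.1 ((Form.atom (Atm.obs a p false) : Form P A).neg) :=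
      provesFrom_imp OLProof.axObs (provesFrom_mem h1)
    exact w.2.1 ⟨_, provesFrom_mem h2, hn⟩

end Aux


/-- strong completeness of OL: every consistent set is satisfiable
    in a pointed observational epistemic model; consequently every formula valid
    over observational epistemic models is a theorem of OL. -/
theorem stmt12 {P A : Type} :
    (∀ Γ : Set (Form P A), OLConsistent Γ →
      ∃ (W : Type) (M : KModel W P A) (w : W), ObsModel M ∧ ∀ φ ∈ Γ, sat M w φ) ∧
    (∀ φ : Form P A,
      (∀ (W : Type) (M : KModel W P A) (w : W), ObsModel M → sat M w φ) →
      OLProof φ) := by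
  have part1 : ∀ Γ : Set (Form P A), OLConsistent Γ →
      ∃ (W : Type) (M : KModel W P A) (w : W), ObsModel M ∧ ∀ φ ∈ Γ, sat M w φ := by
    intro Γ hΓ
    obtain ⟨Δ, hsub, hΔ⟩ := lindenbaum hΓ
    exact ⟨CanW P A, canonical P A, ⟨Δ, hΔ⟩, canonical_obs,
      fun φ hφ => (truth_lemma φ ⟨Δ, hΔ⟩).2 (hsub hφ)⟩
  refine ⟨part1, ?_⟩
  intro φ hvalid
  by_contra hn
  have hcons : OLConsistent ({φ.neg} : Set (Form P A)) := by
    intro hincon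
    have : ¬ OLConsistent ((∅ : Set (Form P A)) ∪ {φ.neg}) := by
      rw [Set.empty_union]; exact not_not_intro hincon
    have h2 : ProvesFrom (∅ : Set (Form P A)) φ.neg.neg := neg_of_inconsistent_insert this
    obtain ⟨L, hL, p⟩ := h2
    have : L = [] := by
      cases L with
      | nil => rfl
      | cons x L => exact absurd (hL x (List.mem_cons_self)) (Set.notMem_empty x)
    subst this
    exact hn (t_dne.mp p)
  obtain ⟨W, M, w, hobs, hsat⟩ := part1 _ hcons
  have : sat M w φ.neg := hsat φ.neg rfl
  exact this (hvalid W M w hobs)
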